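/- (Young integral) Let I ⊆ ℝ be an interval, F ∈ C^ρ(I), X ∈ C^γ(I) with γ + ρ > 1. Define ∫_s^t F dX := [F δX - Λ N(F δX)]_{st}. Then for all s,t ∈ I: |∫_s^t (F_u - F_s) dX_u| ≤ (1/(2^{γ+ρ} - 2)) |t-s|^{γ+ρ} ‖F‖_ρ ‖X‖_γ. -/

import Mathlib

open Filter Finset
noncomputable section
namespace YoungAux

/-- Uniform partition point: `q s t N k = s + (k/N)(t-s)`. -/
def q (s t : ℝ) (N k : ℕ) : ℝ := s + ((k : ℝ) / (N : ℝ)) * (t - s)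

/-- The germ `Ξ_{st} = F_s (X_t - X_s)`. -/
def Xi (F X : ℝ → ℝ) (s t : ℝ) : ℝ := F s * (X t - X s)

/-- Riemann sum over the uniform partition with `N` intervals. -/
def U (F X : ℝ → ℝ) (N : ℕ) (s t : ℝ) : ℝ :=
  ∑ k ∈ range N, Xi F X (q s t N k) (q s t N (k + 1))

/-- The Young integral as limit of dyadic Riemann sums. -/
def Iv (F X : ℝ → ℝ) (s t : ℝ) : ℝ := limUnder atTop fun m => U F X (2 ^ m) s t

lemma q_zero (s t : ℝ) (N : ℕ) : q s t N 0 = s := by simp [q]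

lemma q_self (s t : ℝ) {N : ℕ} (hN : N ≠ 0) : q s t N N = t := by
  have : ((N : ℝ)) ≠ 0 := Nat.cast_ne_zero.2 hN
  simp [q, div_self this]

lemma q_mem_uIcc {s t : ℝ} {N k : ℕ} (hk : k ≤ N) : q s t N k ∈ Set.uIcc s t := by
  rcases Nat.eq_zero_or_pos N with h0 | hpos
  · subst h0
    interval_cases k
    simp [q, Set.left_mem_uIcc]
  · have hN : (0:ℝ) < N := by exact_mod_cast hpos
    have hl : 0 ≤ (k:ℝ)/N := by positivity
    have hr : (k:ℝ)/N ≤ 1 := by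
      rw [div_le_one hN]; exact_mod_cast hk
    rw [Set.mem_uIcc]
    simp only [q]
    rcases le_total s t with hst | hst
    · left; constructor <;> nlinarith
    · right; constructor <;> nlinarith

lemma q_succ_sub (s t : ℝ) {N : ℕ} (hN : N ≠ 0) (k : ℕ) :
    q s t N (k+1) - q s t N k = (t - s) / N := by
  have : ((N : ℝ)) ≠ 0 := Nat.cast_ne_zero.2 hN
  simp only [q]
  push_cast
  field_simp
  ring

lemma q_sub_left (s t : ℝ) (N k : ℕ) : q s t N k - s = ((k:ℝ)/N) * (t - s) := by
  simp [q]

lemma q_one (s t : ℝ) : q s t 2 1 = (s+t)/2 := by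
  norm_num [q]; ring

lemma q_comp {n N : ℕ} (hn : n ≠ 0) (hN : N ≠ 0) (s t : ℝ) (i j : ℕ) :
    q (q s t n i) (q s t n (i+1)) N j = q s t (n*N) (i*N + j) := by
  have h1 : ((n : ℝ)) ≠ 0 := Nat.cast_ne_zero.2 hn
  have h2 : ((N : ℝ)) ≠ 0 := Nat.cast_ne_zero.2 hN
  simp only [q]
  push_cast
  field_simp
  ring

lemma sum_range_mul' {M : Type*} [AddCommMonoid M] (f : ℕ → M) (n N : ℕ) :
    ∑ k ∈ range (n*N), f k = ∑ i ∈ range n, ∑ j ∈ range N, f (i*N + j) := by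
  induction n with
  | zero => simp
  | succ n ih =>
    rw [Nat.succ_mul, sum_range_add, ih, sum_range_succ]

lemma U_concat {n N : ℕ} (hn : n ≠ 0) (hN : N ≠ 0) (F X : ℝ → ℝ) (s t : ℝ) :
    ∑ i ∈ range n, U F X N (q s t n i) (q s t n (i+1)) = U F X (n*N) s t := by
  unfold U
  rw [sum_range_mul']
  refine sum_congr rfl fun i _ => sum_congr rfl fun j _ => ?_
  rw [q_comp hn hN, q_comp hn hN, Nat.add_assoc]

lemma U_one (F X : ℝ → ℝ) (s t : ℝ) : U F X 1 s t = Xi F X s t := by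
  simp [U, q_zero, q_self (s := s) (t := t) one_ne_zero]

lemma U_mid {N : ℕ} (hN : N ≠ 0) (F X : ℝ → ℝ) (s t : ℝ) :
    U F X (2*N) s t = U F X N s ((s+t)/2) + U F X N ((s+t)/2) t := by
  have h := U_concat two_ne_zero hN F X s t
  rw [sum_range_succ, sum_range_one, q_zero, q_one,
    q_self s t two_ne_zero] at h
  exact h.symm

structure Hyp (I : Set ℝ) (F X : ℝ → ℝ) (γ ρ KF KX : ℝ) : Prop where
  conn : I.OrdConnected
  hγ : 0 < γ
  hρ : 0 < ρ
  h1 : 1 < γ + ρ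
  hKF : 0 ≤ KF
  hKX : 0 ≤ KX
  hF : ∀ s ∈ I, ∀ t ∈ I, |F t - F s| ≤ KF * |t - s| ^ ρ
  hX : ∀ s ∈ I, ∀ t ∈ I, |X t - X s| ≤ KX * |t - s| ^ γ

variable {I : Set ℝ} {F X : ℝ → ℝ} {γ ρ KF KX : ℝ}

namespace Hyp

lemma hz (h : Hyp I F X γ ρ KF KX) : 0 < γ + ρ := by linarith [h.h1]

lemma r_pos (h : Hyp I F X γ ρ KF KX) : 0 < (2:ℝ) ^ (1 - (γ + ρ)) :=
  Real.rpow_pos_of_pos two_pos _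

lemma r_lt_one (h : Hyp I F X γ ρ KF KX) : (2:ℝ) ^ (1 - (γ + ρ)) < 1 := by
  have := (Real.rpow_lt_rpow_left_iff (x := 2) one_lt_two
    (y := 1 - (γ + ρ)) (z := 0)).2 (by linarith [h.h1])
  simpa using this

lemma pair (h : Hyp I F X γ ρ KF KX) {a b x y d : ℝ}
    (ha : a ∈ I) (hb : b ∈ I) (hx : x ∈ I) (hy : y ∈ I) (hd : 0 ≤ d)
    (h1 : |b - a| ≤ d) (h2 : |y - x| ≤ d) :
    |(F b - F a) * (X y - X x)| ≤ KF * KX * d ^ (γ + ρ) := by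
  rw [abs_mul]
  have e1 : |F b - F a| ≤ KF * d ^ ρ :=
    (h.hF a ha b hb).trans
      (mul_le_mul_of_nonneg_left (Real.rpow_le_rpow (abs_nonneg _) h1 h.hρ.le) h.hKF)
  have e2 : |X y - X x| ≤ KX * d ^ γ :=
    (h.hX x hx y hy).trans
      (mul_le_mul_of_nonneg_left (Real.rpow_le_rpow (abs_nonneg _) h2 h.hγ.le) h.hKX)
  calc |F b - F a| * |X y - X x| ≤ (KF * d ^ ρ) * (KX * d ^ γ) := by
        apply mul_le_mul e1 e2 (abs_nonneg _)
          (mul_nonneg h.hKF (Real.rpow_nonneg hd _))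
    _ = KF * KX * d ^ (γ + ρ) := by
        rw [Real.rpow_add' hd h.hz.ne']
        ring

lemma crude (h : Hyp I F X γ ρ KF KX) {N : ℕ} (hN : N ≠ 0) {a b : ℝ}
    (ha : a ∈ I) (hb : b ∈ I) :
    |U F X N a b - Xi F X a b| ≤ N * (KF * KX * |b - a| ^ (γ + ρ)) := by
  have hNR : (0:ℝ) < N := by exact_mod_cast Nat.pos_of_ne_zero hN
  have hmem : ∀ k, k ≤ N → q a b N k ∈ I := fun k hk =>
    h.conn.uIcc_subset ha hb (q_mem_uIcc hk)
  have e0 : Xi F X a b = ∑ j ∈ range N, F a * (X (q a b N (j+1)) - X (q a b N j)) := by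
    rw [← mul_sum, Finset.sum_range_sub (fun j => X (q a b N j)), q_zero, q_self a b hN]
    rfl
  rw [U, e0, ← Finset.sum_sub_distrib]
  refine (Finset.abs_sum_le_sum_abs _ _).trans ?_
  have key : ∀ j ∈ range N,
      |Xi F X (q a b N j) (q a b N (j+1)) - F a * (X (q a b N (j+1)) - X (q a b N j))|
        ≤ KF * KX * |b - a| ^ (γ + ρ) := by
    intro j hj
    have hjN : j ≤ N := (mem_range.1 hj).le
    have hjN' : j + 1 ≤ N := mem_range.1 hj
    have e : Xi F X (q a b N j) (q a b N (j+1)) - F a * (X (q a b N (j+1)) - X (q a b N j))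
        = (F (q a b N j) - F a) * (X (q a b N (j+1)) - X (q a b N j)) := by
      unfold Xi; ring
    rw [e]
    apply h.pair ha (hmem j hjN) (hmem j hjN) (hmem (j+1) hjN') (abs_nonneg (b - a))
    · rw [q_sub_left, abs_mul]
      have h1 : |(j:ℝ)/N| ≤ 1 := by
        rw [abs_of_nonneg (by positivity), div_le_one hNR]
        exact_mod_cast hjN
      calc |(j:ℝ)/N| * |b - a| ≤ 1 * |b - a| :=
            mul_le_mul_of_nonneg_right h1 (abs_nonneg _)
        _ = |b - a| := one_mul _
    · rw [q_succ_sub a b hN, abs_div]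
      have : |(N:ℝ)| = N := abs_of_pos hNR
      rw [this]
      exact div_le_self (abs_nonneg _) (by exact_mod_cast Nat.one_le_iff_ne_zero.2 hN)
  calc ∑ j ∈ range N, |Xi F X (q a b N j) (q a b N (j+1)) -
        F a * (X (q a b N (j+1)) - X (q a b N j))|
      ≤ ∑ _j ∈ range N, KF * KX * |b - a| ^ (γ + ρ) := Finset.sum_le_sum key
    _ = N * (KF * KX * |b - a| ^ (γ + ρ)) := by
        rw [Finset.sum_const, card_range, nsmul_eq_mul]

lemma mid_mem (h : Hyp I F X γ ρ KF KX) {s t : ℝ} (hs : s ∈ I) (ht : t ∈ I) :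
    (s+t)/2 ∈ I := by
  have := q_mem_uIcc (s := s) (t := t) (N := 2) (k := 1) (by norm_num)
  rw [q_one] at this
  exact h.conn.uIcc_subset hs ht this

lemma half_pow (h : Hyp I F X γ ρ KF KX) {s t : ℝ} :
    (|t - s| / 2) ^ (γ + ρ) = (2:ℝ) ^ (-(γ + ρ)) * |t - s| ^ (γ + ρ) := by
  rw [Real.div_rpow (abs_nonneg _) (by norm_num), Real.rpow_neg (by norm_num)]
  ring

lemma r_eq (h : Hyp I F X γ ρ KF KX) :
    (2:ℝ) ^ (1 - (γ + ρ)) = 2 * (2:ℝ) ^ (-(γ + ρ)) := by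
  rw [show 1 - (γ + ρ) = 1 + -(γ + ρ) by ring, Real.rpow_add two_pos, Real.rpow_one]

lemma step (h : Hyp I F X γ ρ KF KX) :
    ∀ n : ℕ, ∀ s ∈ I, ∀ t ∈ I,
      |U F X (2 ^ (n+1)) s t - U F X (2 ^ n) s t|
        ≤ (KF * KX * (2:ℝ) ^ (-(γ + ρ)) * |t - s| ^ (γ + ρ)) * ((2:ℝ) ^ (1 - (γ + ρ))) ^ n := by
  intro n
  induction n with
  | zero =>
    intro s hs t ht
    have hm : (s+t)/2 ∈ I := h.mid_mem hs ht
    have m1 : U F X (2 ^ 1) s t = U F X 1 s ((s+t)/2) + U F X 1 ((s+t)/2) t := by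
      rw [show (2:ℕ) ^ 1 = 2 * 1 by norm_num]
      exact U_mid one_ne_zero F X s t
    rw [pow_zero, pow_zero, mul_one, m1, U_one, U_one, U_one]
    have e : Xi F X s ((s+t)/2) + Xi F X ((s+t)/2) t - Xi F X s t
        = (F ((s+t)/2) - F s) * (X t - X ((s+t)/2)) := by
      unfold Xi; ring
    rw [e]
    have hb := h.pair (d := |t - s|/2) hs hm hm ht (by positivity)
      (by rw [show (s+t)/2 - s = (t-s)/2 by ring, abs_div]; norm_num)
      (by rw [show t - (s+t)/2 = (t-s)/2 by ring, abs_div]; norm_num)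
    rw [h.half_pow] at hb
    calc |(F ((s+t)/2) - F s) * (X t - X ((s+t)/2))|
        ≤ KF * KX * ((2:ℝ) ^ (-(γ + ρ)) * |t - s| ^ (γ + ρ)) := hb
      _ = KF * KX * (2:ℝ) ^ (-(γ + ρ)) * |t - s| ^ (γ + ρ) := by ring
  | succ n ih =>
    intro s hs t ht
    have hm : (s+t)/2 ∈ I := h.mid_mem hs ht
    have e : U F X (2 ^ (n+2)) s t - U F X (2 ^ (n+1)) s t
        = (U F X (2 ^ (n+1)) s ((s+t)/2) - U F X (2 ^ n) s ((s+t)/2))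
          + (U F X (2 ^ (n+1)) ((s+t)/2) t - U F X (2 ^ n) ((s+t)/2) t) := by
      have m1 : U F X (2 ^ (n+2)) s t
          = U F X (2 ^ (n+1)) s ((s+t)/2) + U F X (2 ^ (n+1)) ((s+t)/2) t := by
        rw [show (2:ℕ) ^ (n+2) = 2 * 2 ^ (n+1) by ring]
        exact U_mid (pow_ne_zero _ two_ne_zero) F X s t
      have m2 : U F X (2 ^ (n+1)) s t
          = U F X (2 ^ n) s ((s+t)/2) + U F X (2 ^ n) ((s+t)/2) t := by
        rw [show (2:ℕ) ^ (n+1) = 2 * 2 ^ n by ring]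
        exact U_mid (pow_ne_zero _ two_ne_zero) F X s t
      rw [m1, m2]
      ring
    rw [e]
    have i1 := ih s hs ((s+t)/2) hm
    have i2 := ih ((s+t)/2) hm t ht
    have a1 : |(s+t)/2 - s| = |t - s| / 2 := by
      rw [show (s+t)/2 - s = (t-s)/2 by ring, abs_div]; norm_num
    have a2 : |t - (s+t)/2| = |t - s| / 2 := by
      rw [show t - (s+t)/2 = (t-s)/2 by ring, abs_div]; norm_num
    rw [a1] at i1
    rw [a2] at i2
    rw [h.half_pow] at i1 i2
    refine (abs_add_le _ _).trans ?_
    have rp : (0:ℝ) ≤ ((2:ℝ) ^ (1 - (γ + ρ))) ^ n := by positivity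
    calc |U F X (2 ^ (n+1)) s ((s+t)/2) - U F X (2 ^ n) s ((s+t)/2)|
          + |U F X (2 ^ (n+1)) ((s+t)/2) t - U F X (2 ^ n) ((s+t)/2) t|
        ≤ (KF * KX * (2:ℝ) ^ (-(γ + ρ)) * ((2:ℝ) ^ (-(γ + ρ)) * |t - s| ^ (γ + ρ)))
            * ((2:ℝ) ^ (1 - (γ + ρ))) ^ n
          + (KF * KX * (2:ℝ) ^ (-(γ + ρ)) * ((2:ℝ) ^ (-(γ + ρ)) * |t - s| ^ (γ + ρ)))
            * ((2:ℝ) ^ (1 - (γ + ρ))) ^ n := add_le_add i1 i2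
      _ = (KF * KX * (2:ℝ) ^ (-(γ + ρ)) * |t - s| ^ (γ + ρ))
            * ((2:ℝ) ^ (1 - (γ + ρ))) ^ (n+1) := by
          rw [pow_succ, h.r_eq]
          ring

lemma cauchy (h : Hyp I F X γ ρ KF KX) {s t : ℝ} (hs : s ∈ I) (ht : t ∈ I) :
    CauchySeq (fun m => U F X (2 ^ m) s t) := by
  apply cauchySeq_of_le_geometric ((2:ℝ) ^ (1 - (γ + ρ)))
    (KF * KX * (2:ℝ) ^ (-(γ + ρ)) * |t - s| ^ (γ + ρ)) h.r_lt_one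
  intro n
  rw [Real.dist_eq, abs_sub_comm]
  exact h.step n s hs t ht

lemma tendsto_Iv (h : Hyp I F X γ ρ KF KX) {s t : ℝ} (hs : s ∈ I) (ht : t ∈ I) :
    Tendsto (fun m => U F X (2 ^ m) s t) atTop (nhds (Iv F X s t)) :=
  (h.cauchy hs ht).tendsto_limUnder

lemma main_est (h : Hyp I F X γ ρ KF KX) {s t : ℝ} (hs : s ∈ I) (ht : t ∈ I) :
    |Iv F X s t - F s * (X t - X s)|
      ≤ (1 / ((2:ℝ) ^ (γ + ρ) - 2)) * |t - s| ^ (γ + ρ) * KF * KX := by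
  have hd := dist_le_of_le_geometric_of_tendsto₀ ((2:ℝ) ^ (1 - (γ + ρ)))
    (KF * KX * (2:ℝ) ^ (-(γ + ρ)) * |t - s| ^ (γ + ρ)) h.r_lt_one
    (fun n => by rw [Real.dist_eq, abs_sub_comm]; exact h.step n s hs t ht)
    (h.tendsto_Iv hs ht)
  rw [pow_zero, U_one, Real.dist_eq] at hd
  have e : Xi F X s t = F s * (X t - X s) := rfl
  rw [e, abs_sub_comm] at hd
  refine hd.trans (le_of_eq ?_)
  have h2 : (0:ℝ) < (2:ℝ) ^ (γ + ρ) := Real.rpow_pos_of_pos two_pos _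
  have h2' : (2:ℝ) < (2:ℝ) ^ (γ + ρ) := by
    have := (Real.rpow_lt_rpow_left_iff (x := 2) one_lt_two (y := 1) (z := γ + ρ)).2 h.h1
    simpa using this
  have hrw : (2:ℝ) ^ (1 - (γ + ρ)) = 2 / (2:ℝ) ^ (γ + ρ) := by
    rw [Real.rpow_sub two_pos, Real.rpow_one]
  have hrw2 : (2:ℝ) ^ (-(γ + ρ)) = ((2:ℝ) ^ (γ + ρ))⁻¹ := Real.rpow_neg (by norm_num) _
  rw [hrw, hrw2]
  have hne : (2:ℝ) ^ (γ + ρ) - 2 ≠ 0 := by linarith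
  field_simp

lemma count_bound (h : Hyp I F X γ ρ KF KX) (m : ℕ) {x : ℝ} (hx : 0 ≤ x) :
    (2:ℝ)^m * (x / (2:ℝ)^m)^(γ+ρ) = x^(γ+ρ) * ((2:ℝ)^(1-(γ+ρ)))^m := by
  have h2m : (0:ℝ) < (2:ℝ)^m := by positivity
  rw [Real.div_rpow hx h2m.le]
  have e1 : ((2:ℝ)^m) = (2:ℝ)^((m:ℕ):ℝ) := (Real.rpow_natCast 2 m).symm
  have e2 : ((2:ℝ)^(1-(γ+ρ)))^m = (2:ℝ)^((1-(γ+ρ))*(m:ℝ)) := by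
    rw [← Real.rpow_natCast ((2:ℝ)^(1-(γ+ρ))) m,
      ← Real.rpow_mul (by norm_num : (0:ℝ) ≤ 2)]
  have e3 : ((2:ℝ)^((m:ℕ):ℝ))^(γ+ρ) = (2:ℝ)^((m:ℝ)*(γ+ρ)) := by
    rw [← Real.rpow_mul (by norm_num : (0:ℝ) ≤ 2)]
  have key : (2:ℝ)^((1-(γ+ρ))*(m:ℝ)) * (2:ℝ)^((m:ℝ)*(γ+ρ)) = (2:ℝ)^((m:ℕ):ℝ) := by
    rw [← Real.rpow_add two_pos]; congr 1; ring
  rw [e1, e3, e2, div_eq_mul_inv, ← Real.rpow_neg (by norm_num : (0:ℝ) ≤ 2)]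
  calc (2:ℝ)^((m:ℕ):ℝ) * (x^(γ+ρ) * (2:ℝ)^(-((m:ℝ)*(γ+ρ))))
      = x^(γ+ρ) * ((2:ℝ)^((m:ℕ):ℝ) * (2:ℝ)^(-((m:ℝ)*(γ+ρ)))) := by ring
    _ = x^(γ+ρ) * (2:ℝ)^((1-(γ+ρ))*(m:ℝ)) := by
        rw [← Real.rpow_add two_pos]
        congr 1
        ring

lemma tendsto_U_mul (h : Hyp I F X γ ρ KF KX) {n : ℕ} (hn : n ≠ 0) {s t : ℝ}
    (hs : s ∈ I) (ht : t ∈ I) :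
    Tendsto (fun m => U F X (n * 2 ^ m) s t) atTop (nhds (Iv F X s t)) := by
  have hdiff : ∀ m : ℕ, |U F X (n * 2^m) s t - U F X (2^m) s t|
      ≤ ((n : ℝ) * (KF*KX*|t - s|^(γ+ρ))) * ((2:ℝ)^(1-(γ+ρ)))^m := by
    intro m
    have hconc := U_concat (pow_ne_zero m two_ne_zero) hn F X s t
    have hdef : U F X (2^m) s t
        = ∑ i ∈ range (2^m), Xi F X (q s t (2^m) i) (q s t (2^m) (i+1)) := rfl
    rw [show n * 2^m = 2^m * n by ring, ← hconc, hdef, ← Finset.sum_sub_distrib]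
    refine (Finset.abs_sum_le_sum_abs _ _).trans ?_
    have hterm : ∀ i ∈ range (2^m),
        |U F X n (q s t (2^m) i) (q s t (2^m) (i+1))
          - Xi F X (q s t (2^m) i) (q s t (2^m) (i+1))|
        ≤ (n:ℝ) * (KF*KX*(|t - s|/((2^m : ℕ):ℝ))^(γ+ρ)) := by
      intro i hi
      have hiN := mem_range.1 hi
      have ha := h.conn.uIcc_subset hs ht (q_mem_uIcc (k := i) hiN.le)
      have hb := h.conn.uIcc_subset hs ht (q_mem_uIcc (k := i+1) hiN)
      have hc := h.crude hn ha hb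
      have e : |q s t (2^m) (i+1) - q s t (2^m) i| = |t - s|/((2^m : ℕ):ℝ) := by
        rw [q_succ_sub s t (pow_ne_zero m two_ne_zero), abs_div]
        congr 1
        exact abs_of_pos (by positivity)
      rw [e] at hc
      exact hc
    refine (Finset.sum_le_sum hterm).trans (le_of_eq ?_)
    rw [Finset.sum_const, card_range, nsmul_eq_mul]
    push_cast
    have cb := h.count_bound m (abs_nonneg (t - s))
    calc (2:ℝ)^m * ((n:ℝ) * (KF * KX * (|t - s| / (2:ℝ)^m)^(γ+ρ)))
        = ((n:ℝ) * (KF*KX)) * ((2:ℝ)^m * (|t - s|/(2:ℝ)^m)^(γ+ρ)) := by ring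
      _ = (n:ℝ) * (KF*KX*|t - s|^(γ+ρ)) * ((2:ℝ)^(1-(γ+ρ)))^m := by rw [cb]; ring
  have h0 : Tendsto (fun m => U F X (n*2^m) s t - U F X (2^m) s t) atTop (nhds 0) := by
    apply squeeze_zero_norm hdiff
    simpa using (tendsto_pow_atTop_nhds_zero_of_lt_one h.r_pos.le h.r_lt_one).const_mul
      ((n : ℝ) * (KF*KX*|t - s|^(γ+ρ)))
  have h1 := (h.tendsto_Iv hs ht).add h0
  have ee : (fun m => U F X (2^m) s t + (U F X (n*2^m) s t - U F X (2^m) s t))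
      = fun m => U F X (n*2^m) s t := funext fun m => by ring
  rw [ee] at h1
  simpa using h1

lemma grid (h : Hyp I F X γ ρ KF KX) {n : ℕ} (hn : n ≠ 0) {s t : ℝ}
    (hs : s ∈ I) (ht : t ∈ I) :
    ∑ i ∈ range n, Iv F X (q s t n i) (q s t n (i+1)) = Iv F X s t := by
  have hmem : ∀ k, k ≤ n → q s t n k ∈ I := fun k hk =>
    h.conn.uIcc_subset hs ht (q_mem_uIcc hk)
  have h1 : Tendsto (fun m => ∑ i ∈ range n, U F X (2^m) (q s t n i) (q s t n (i+1)))
      atTop (nhds (∑ i ∈ range n, Iv F X (q s t n i) (q s t n (i+1)))) :=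
    tendsto_finset_sum _ (fun i hi =>
      h.tendsto_Iv (hmem i (mem_range.1 hi).le) (hmem (i+1) (mem_range.1 hi)))
  have h2 : (fun m => ∑ i ∈ range n, U F X (2^m) (q s t n i) (q s t n (i+1)))
      = fun m => U F X (n * 2^m) s t :=
    funext fun m => U_concat hn (pow_ne_zero m two_ne_zero) F X s t
  rw [h2] at h1
  exact tendsto_nhds_unique h1 (h.tendsto_U_mul hn hs ht)

lemma Iv_self (h : Hyp I F X γ ρ KF KX) {a : ℝ} (ha : a ∈ I) : Iv F X a a = 0 := by
  have e : (fun m => U F X (2^m) a a) = fun _ => 0 := by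
    funext m
    unfold U Xi q
    simp
  have ht := h.tendsto_Iv ha ha
  rw [e] at ht
  exact tendsto_nhds_unique ht tendsto_const_nhds

lemma chen_q (h : Hyp I F X γ ρ KF KX) {n k : ℕ} (hn : n ≠ 0) (hk : k ≤ n)
    {s t : ℝ} (hs : s ∈ I) (ht : t ∈ I) :
    Iv F X s (q s t n k) + Iv F X (q s t n k) t = Iv F X s t := by
  have hqI : q s t n k ∈ I := h.conn.uIcc_subset hs ht (q_mem_uIcc hk)
  have hnR : ((n:ℝ)) ≠ 0 := Nat.cast_ne_zero.2 hn
  rcases Nat.eq_zero_or_pos k with rfl | hk0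
  · rw [q_zero, h.Iv_self hs, zero_add]
  rcases eq_or_lt_of_le hk with rfl | hkn
  · rw [q_self s t hn, h.Iv_self ht, add_zero]
  have hkne : k ≠ 0 := hk0.ne'
  have hnk : n - k ≠ 0 := by omega
  have hkR : ((k:ℝ)) ≠ 0 := Nat.cast_ne_zero.2 hkne
  have hnkR : ((n:ℝ)) - (k:ℝ) ≠ 0 := by
    have : (k:ℝ) < n := by exact_mod_cast hkn
    linarith
  have e1 : ∀ i : ℕ, q s (q s t n k) k i = q s t n i := by
    intro i
    simp only [q]
    field_simp
    ring
  have e2 : ∀ j : ℕ, q (q s t n k) t (n-k) j = q s t n (k + j) := by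
    intro j
    simp only [q]
    rw [Nat.cast_sub hk]
    push_cast
    field_simp
    ring
  have A1 : ∑ i ∈ range k, Iv F X (q s t n i) (q s t n (i+1)) = Iv F X s (q s t n k) := by
    have hg := h.grid hkne hs hqI
    rw [← hg]
    exact sum_congr rfl fun i _ => by rw [e1 i, e1 (i+1)]
  have A2 : ∑ j ∈ range (n-k), Iv F X (q s t n (k+j)) (q s t n (k+j+1))
      = Iv F X (q s t n k) t := by
    have hg := h.grid hnk hqI ht
    rw [← hg]
    exact sum_congr rfl fun j _ => by rw [e2 j, e2 (j+1), ← Nat.add_assoc]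
  have split : ∀ f : ℕ → ℝ,
      ∑ i ∈ range n, f i = ∑ i ∈ range k, f i + ∑ j ∈ range (n-k), f (k+j) := by
    intro f
    rw [← Finset.sum_range_add]
    have : k + (n - k) = n := by omega
    rw [this]
  rw [← A1, ← A2, ← split (fun i => Iv F X (q s t n i) (q s t n (i+1)))]
  exact h.grid hn hs ht

lemma Iv_comm (h : Hyp I F X γ ρ KF KX) {a b : ℝ} (ha : a ∈ I) (hb : b ∈ I) :
    Iv F X b a = - Iv F X a b := by
  have rev : ∀ N : ℕ, N ≠ 0 → U F X N b a + U F X N a b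
      = ∑ j ∈ range N, -((F (q a b N (j+1)) - F (q a b N j))
          * (X (q a b N (j+1)) - X (q a b N j))) := by
    intro N hN
    have hNR : ((N:ℝ)) ≠ 0 := Nat.cast_ne_zero.2 hN
    have hq : ∀ k : ℕ, k ≤ N → q b a N k = q a b N (N - k) := by
      intro k hk
      simp only [q]
      rw [Nat.cast_sub hk]
      field_simp
      ring
    have e : U F X N b a = ∑ j ∈ range N, Xi F X (q a b N (j+1)) (q a b N j) := by
      rw [U]
      have hc : ∀ k ∈ range N, Xi F X (q b a N k) (q b a N (k+1))
          = (fun j => Xi F X (q a b N (j+1)) (q a b N j)) (N - 1 - k) := by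
        intro k hk
        have hkN : k < N := mem_range.1 hk
        rw [hq k hkN.le, hq (k+1) hkN]
        have o1 : N - k = (N-1-k)+1 := by omega
        have o2 : N - (k+1) = N-1-k := by omega
        rw [o1, o2]
      rw [Finset.sum_congr rfl hc]
      exact Finset.sum_range_reflect (fun j => Xi F X (q a b N (j+1)) (q a b N j)) N
    rw [e, U, ← Finset.sum_add_distrib]
    refine sum_congr rfl fun j _ => ?_
    unfold Xi
    ring
  have hbound : ∀ m : ℕ, |U F X (2^m) b a + U F X (2^m) a b|
      ≤ (KF*KX*|b - a|^(γ+ρ)) * ((2:ℝ)^(1-(γ+ρ)))^m := by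
    intro m
    rw [rev _ (pow_ne_zero m two_ne_zero)]
    refine (Finset.abs_sum_le_sum_abs _ _).trans ?_
    have hterm : ∀ j ∈ range (2^m),
        |-((F (q a b (2^m) (j+1)) - F (q a b (2^m) j))
          * (X (q a b (2^m) (j+1)) - X (q a b (2^m) j)))|
        ≤ KF*KX*(|b - a|/((2^m : ℕ):ℝ))^(γ+ρ) := by
      intro j hj
      rw [abs_neg]
      have hjm := mem_range.1 hj
      have h1 := h.conn.uIcc_subset ha hb (q_mem_uIcc (k := j) hjm.le)
      have h2 := h.conn.uIcc_subset ha hb (q_mem_uIcc (k := j+1) hjm)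
      have e : |q a b (2^m) (j+1) - q a b (2^m) j| = |b - a|/((2^m : ℕ):ℝ) := by
        rw [q_succ_sub a b (pow_ne_zero m two_ne_zero), abs_div]
        congr 1
        exact abs_of_pos (by positivity)
      exact h.pair h1 h2 h1 h2 (by positivity) (le_of_eq e) (le_of_eq e)
    refine (sum_le_sum hterm).trans (le_of_eq ?_)
    rw [sum_const, card_range, nsmul_eq_mul]
    push_cast
    have cb := h.count_bound m (abs_nonneg (b - a))
    calc (2:ℝ)^m * (KF*KX*(|b - a|/(2:ℝ)^m)^(γ+ρ))
        = (KF*KX) * ((2:ℝ)^m * (|b - a|/(2:ℝ)^m)^(γ+ρ)) := by ring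
      _ = (KF*KX*|b - a|^(γ+ρ)) * ((2:ℝ)^(1-(γ+ρ)))^m := by rw [cb]; ring
  have h0 : Tendsto (fun m => U F X (2^m) b a + U F X (2^m) a b) atTop (nhds 0) := by
    apply squeeze_zero_norm hbound
    simpa using (tendsto_pow_atTop_nhds_zero_of_lt_one h.r_pos.le h.r_lt_one).const_mul
      (KF*KX*|b - a|^(γ+ρ))
  have h1 := h0.add (h.tendsto_Iv ha hb).neg
  have ee : (fun m => (U F X (2^m) b a + U F X (2^m) a b) + -(U F X (2^m) a b))
      = fun m => U F X (2^m) b a := funext fun m => by ring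
  rw [ee] at h1
  refine tendsto_nhds_unique (h.tendsto_Iv hb ha) ?_
  simpa using h1

end Hyp

lemma holder_cont {G : ℝ → ℝ} {K e : ℝ} (he : 0 < e)
    (hb : ∀ s ∈ I, ∀ t ∈ I, |G t - G s| ≤ K * |t - s| ^ e) : ContinuousOn G I := by
  intro x hx
  have c1 : Tendsto (fun y : ℝ => |y - x|) (nhds x) (nhds 0) := by
    have : Continuous (fun y : ℝ => |y - x|) :=
      continuous_abs.comp (continuous_id.sub continuous_const)
    simpa using this.tendsto x
  have c2 : ContinuousAt (fun d : ℝ => d ^ e) 0 :=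
    Real.continuousAt_rpow_const 0 e (Or.inr he.le)
  have c3 : Tendsto (fun y : ℝ => |y - x| ^ e) (nhds x) (nhds 0) := by
    have := c2.tendsto.comp c1
    simpa [Function.comp_def, Real.zero_rpow he.ne'] using this
  have h1 : Tendsto (fun y => K * |y - x| ^ e) (nhdsWithin x I) (nhds 0) := by
    have := (c3.const_mul K).mono_left (nhdsWithin_le_nhds (s := I))
    simpa using this
  have h2 : ∀ᶠ y in nhdsWithin x I, |G y - G x| ≤ K * |y - x| ^ e :=
    eventually_mem_nhdsWithin.mono (fun y hy => hb x hx y hy)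
  have h3 : Tendsto (fun y => G y - G x) (nhdsWithin x I) (nhds 0) :=
    squeeze_zero_norm' h2 h1
  have h4 := h3.add_const (G x)
  simpa [ContinuousWithinAt] using h4

namespace Hyp

lemma contF (h : Hyp I F X γ ρ KF KX) : ContinuousOn F I := holder_cont h.hρ h.hF

lemma contX (h : Hyp I F X γ ρ KF KX) : ContinuousOn X I := holder_cont h.hγ h.hX

lemma unif_bound (h : Hyp I F X γ ρ KF KX) {s t : ℝ} (hs : s ∈ I) (ht : t ∈ I)
    {R : ℝ} (hR : |t - s| ≤ |R|) (m : ℕ) :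
    dist (Iv F X s t) (U F X (2^m) s t)
      ≤ (KF*KX*(2:ℝ)^(-(γ+ρ)) * |R|^(γ+ρ)) * ((2:ℝ)^(1-(γ+ρ)))^m
          / (1 - (2:ℝ)^(1-(γ+ρ))) := by
  have c1 : 0 ≤ KF*KX*(2:ℝ)^(-(γ+ρ)) :=
    mul_nonneg (mul_nonneg h.hKF h.hKX) (Real.rpow_nonneg (by norm_num) _)
  have hgeo : ∀ k : ℕ, dist (U F X (2^k) s t) (U F X (2^(k+1)) s t)
      ≤ (KF*KX*(2:ℝ)^(-(γ+ρ)) * |R|^(γ+ρ)) * ((2:ℝ)^(1-(γ+ρ)))^k := by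
    intro k
    rw [Real.dist_eq, abs_sub_comm]
    refine (h.step k s hs t ht).trans ?_
    have hbb : |t - s|^(γ+ρ) ≤ |R|^(γ+ρ) :=
      Real.rpow_le_rpow (abs_nonneg _) hR h.hz.le
    have c2 : (0:ℝ) ≤ ((2:ℝ)^(1-(γ+ρ)))^k := by positivity
    exact mul_le_mul_of_nonneg_right (mul_le_mul_of_nonneg_left hbb c1) c2
  have := dist_le_of_le_geometric_of_tendsto ((2:ℝ)^(1-(γ+ρ)))
    ((KF*KX*(2:ℝ)^(-(γ+ρ)) * |R|^(γ+ρ))) h.r_lt_one hgeo (h.tendsto_Iv hs ht) m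
  rw [dist_comm] at this
  exact this

lemma bound_tendsto_zero (h : Hyp I F X γ ρ KF KX) (C : ℝ) :
    Tendsto (fun m : ℕ => C * ((2:ℝ)^(1-(γ+ρ)))^m / (1 - (2:ℝ)^(1-(γ+ρ))))
      atTop (nhds 0) := by
  have h1 := (tendsto_pow_atTop_nhds_zero_of_lt_one h.r_pos.le h.r_lt_one).const_mul C
  have h2 := h1.div_const (1 - (2:ℝ)^(1-(γ+ρ)))
  simpa using h2

lemma contIv_snd (h : Hyp I F X γ ρ KF KX) {a : ℝ} (ha : a ∈ I) (R : ℝ) :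
    ContinuousOn (fun b => Iv F X a b) (I ∩ Metric.closedBall a R) := by
  have hTU : TendstoUniformlyOn (fun m b => U F X (2^m) a b)
      (fun b => Iv F X a b) atTop (I ∩ Metric.closedBall a R) := by
    rw [Metric.tendstoUniformlyOn_iff]
    intro ε hε
    filter_upwards [(h.bound_tendsto_zero
      (KF*KX*(2:ℝ)^(-(γ+ρ)) * |R|^(γ+ρ))).eventually (gt_mem_nhds hε)] with m hm b hbS
    refine lt_of_le_of_lt ?_ hm
    have hba : |b - a| ≤ |R| := by
      have := hbS.2
      rw [Metric.mem_closedBall, Real.dist_eq] at this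
      exact this.trans (le_abs_self R)
    exact h.unif_bound ha hbS.1 hba m
  refine hTU.continuousOn (Filter.Eventually.of_forall fun m => ?_).frequently
  show ContinuousOn (fun b => U F X (2^m) a b) _
  apply continuousOn_finset_sum
  intro k hk
  have hkm : k + 1 ≤ 2^m := mem_range.1 hk
  have hqc : ∀ j : ℕ, Continuous (fun b => q a b (2^m) j) := by
    intro j
    exact continuous_const.add (continuous_const.mul (continuous_id.sub continuous_const))
  have hmap : ∀ j : ℕ, j ≤ 2^m →
      Set.MapsTo (fun b => q a b (2^m) j) (I ∩ Metric.closedBall a R) I :=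
    fun j hj b hbS => h.conn.uIcc_subset ha hbS.1 (q_mem_uIcc hj)
  show ContinuousOn (fun b => F (q a b (2^m) k)
    * (X (q a b (2^m) (k+1)) - X (q a b (2^m) k))) _
  exact (h.contF.comp (hqc k).continuousOn (hmap k (by omega))).mul
    ((h.contX.comp (hqc (k+1)).continuousOn (hmap (k+1) hkm)).sub
      (h.contX.comp (hqc k).continuousOn (hmap k (by omega))))

lemma contIv_fst (h : Hyp I F X γ ρ KF KX) {c : ℝ} (hc : c ∈ I) (R : ℝ) :
    ContinuousOn (fun b => Iv F X b c) (I ∩ Metric.closedBall c R) := by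
  have hTU : TendstoUniformlyOn (fun m b => U F X (2^m) b c)
      (fun b => Iv F X b c) atTop (I ∩ Metric.closedBall c R) := by
    rw [Metric.tendstoUniformlyOn_iff]
    intro ε hε
    filter_upwards [(h.bound_tendsto_zero
      (KF*KX*(2:ℝ)^(-(γ+ρ)) * |R|^(γ+ρ))).eventually (gt_mem_nhds hε)] with m hm b hbS
    refine lt_of_le_of_lt ?_ hm
    have hba : |c - b| ≤ |R| := by
      have := hbS.2
      rw [Metric.mem_closedBall, Real.dist_eq, abs_sub_comm] at this
      exact this.trans (le_abs_self R)
    exact h.unif_bound hbS.1 hc hba m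
  refine hTU.continuousOn (Filter.Eventually.of_forall fun m => ?_).frequently
  show ContinuousOn (fun b => U F X (2^m) b c) _
  apply continuousOn_finset_sum
  intro k hk
  have hkm : k + 1 ≤ 2^m := mem_range.1 hk
  have hqc : ∀ j : ℕ, Continuous (fun b => q b c (2^m) j) := by
    intro j
    exact continuous_id.add (continuous_const.mul (continuous_const.sub continuous_id))
  have hmap : ∀ j : ℕ, j ≤ 2^m →
      Set.MapsTo (fun b => q b c (2^m) j) (I ∩ Metric.closedBall c R) I :=
    fun j hj b hbS => h.conn.uIcc_subset hbS.1 hc (q_mem_uIcc hj)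
  show ContinuousOn (fun b => F (q b c (2^m) k)
    * (X (q b c (2^m) (k+1)) - X (q b c (2^m) k))) _
  exact (h.contF.comp (hqc k).continuousOn (hmap k (by omega))).mul
    ((h.contX.comp (hqc (k+1)).continuousOn (hmap (k+1) hkm)).sub
      (h.contX.comp (hqc k).continuousOn (hmap k (by omega))))

lemma chen_mid (h : Hyp I F X γ ρ KF KX) {a c b : ℝ} (ha : a ∈ I) (hc : c ∈ I)
    (hb : b ∈ Set.uIcc a c) : Iv F X a b + Iv F X b c = Iv F X a c := by
  rcases eq_or_ne a c with rfl | hac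
  · have hba : b = a := by simpa [Set.uIcc_self] using hb
    subst hba
    simp [h.Iv_self ha]
  have hbI : b ∈ I := h.conn.uIcc_subset ha hc hb
  have hKI : Set.uIcc a c ⊆ I := h.conn.uIcc_subset ha hc
  have hK1 : Set.uIcc a c ⊆ I ∩ Metric.closedBall a |c - a| := by
    intro x hx
    refine ⟨hKI hx, ?_⟩
    rw [Metric.mem_closedBall, Real.dist_eq]
    rcases Set.mem_uIcc.1 hx with ⟨h1, h2⟩ | ⟨h1, h2⟩
    · rw [abs_of_nonneg (by linarith)]
      exact le_trans (by linarith [le_abs_self (c - a)] : x - a ≤ |c - a|) le_rfl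
    · rw [abs_of_nonpos (by linarith)]
      have := neg_abs_le (c - a)
      linarith
  have hK2 : Set.uIcc a c ⊆ I ∩ Metric.closedBall c |a - c| := by
    intro x hx
    refine ⟨hKI hx, ?_⟩
    rw [Metric.mem_closedBall, Real.dist_eq]
    rcases Set.mem_uIcc.1 hx with ⟨h1, h2⟩ | ⟨h1, h2⟩
    · rw [abs_of_nonpos (by linarith)]
      have := neg_abs_le (a - c)
      linarith
    · rw [abs_of_nonneg (by linarith)]
      linarith [le_abs_self (a - c)]
  have contψ : ContinuousOn (fun x => Iv F X a x + Iv F X x c) (Set.uIcc a c) :=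
    ((h.contIv_snd ha |c - a|).mono hK1).add ((h.contIv_fst hc |a - c|).mono hK2)
  have hca : c - a ≠ 0 := sub_ne_zero.2 (Ne.symm hac)
  set θ := (b - a)/(c - a) with hθdef
  have hθ : 0 ≤ θ ∧ θ ≤ 1 := by
    rcases Set.mem_uIcc.1 hb with ⟨h1, h2⟩ | ⟨h1, h2⟩
    · have hlt : a < c := lt_of_le_of_ne (le_trans h1 h2) hac
      constructor
      · apply div_nonneg <;> linarith
      · rw [div_le_one (by linarith)]; linarith
    · have hlt : c < a := lt_of_le_of_ne (le_trans h1 h2) (fun e => hac e.symm)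
      have e : θ = (a - b)/(a - c) := by
        rw [hθdef, ← neg_div_neg_eq]; ring_nf
      rw [e]
      constructor
      · apply div_nonneg <;> linarith
      · rw [div_le_one (by linarith)]; linarith
  set u : ℕ → ℝ := fun j => q a c (j+1) (⌊θ * ((j:ℝ)+1)⌋₊) with hudef
  have hkle : ∀ j : ℕ, ⌊θ * ((j:ℝ)+1)⌋₊ ≤ j + 1 := by
    intro j
    have h1 : θ * ((j:ℝ)+1) ≤ ((j+1 : ℕ) : ℝ) := by
      push_cast
      nlinarith [hθ.1, hθ.2, (show (0:ℝ) ≤ (j:ℝ)+1 by positivity)]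
    calc ⌊θ * ((j:ℝ)+1)⌋₊ ≤ ⌊((j+1 : ℕ) : ℝ)⌋₊ := Nat.floor_le_floor h1
      _ = j+1 := Nat.floor_natCast _
  have humem : ∀ j, u j ∈ Set.uIcc a c := fun j => q_mem_uIcc (hkle j)
  have hueval : ∀ j, Iv F X a (u j) + Iv F X (u j) c = Iv F X a c := fun j =>
    h.chen_q (Nat.succ_ne_zero j) (hkle j) ha hc
  have hutend : Tendsto u atTop (nhds b) := by
    rw [tendsto_iff_dist_tendsto_zero]
    have hbnd : ∀ j : ℕ, dist (u j) b ≤ |c - a| * (1/((j:ℝ)+1)) := by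
      intro j
      have hj : (0:ℝ) < (j:ℝ)+1 := by positivity
      have hnn : 0 ≤ θ * ((j:ℝ)+1) := mul_nonneg hθ.1 (by positivity)
      have hfl1 : ((⌊θ * ((j:ℝ)+1)⌋₊ : ℕ) : ℝ) ≤ θ * ((j:ℝ)+1) := Nat.floor_le hnn
      have hfl2 : θ * ((j:ℝ)+1) - 1 < ((⌊θ * ((j:ℝ)+1)⌋₊ : ℕ) : ℝ) :=
        Nat.sub_one_lt_floor _
      rw [Real.dist_eq]
      have hbeq : b = a + θ * (c - a) := by
        rw [hθdef]; field_simp; ring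
      have heq : u j - b
          = (((⌊θ * ((j:ℝ)+1)⌋₊ : ℕ) : ℝ)/((j:ℝ)+1) - θ) * (c - a) := by
        rw [hudef]
        simp only [q]
        rw [hbeq]
        push_cast
        ring
      rw [heq, abs_mul]
      have hsmall : |((⌊θ * ((j:ℝ)+1)⌋₊ : ℕ) : ℝ)/((j:ℝ)+1) - θ| ≤ 1/((j:ℝ)+1) := by
        have e : ((⌊θ * ((j:ℝ)+1)⌋₊ : ℕ) : ℝ)/((j:ℝ)+1) - θ
            = (((⌊θ * ((j:ℝ)+1)⌋₊ : ℕ) : ℝ) - θ*((j:ℝ)+1))/((j:ℝ)+1) := by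
          field_simp
        rw [e, abs_div, abs_of_pos hj]
        gcongr
        rw [abs_le]
        constructor <;> linarith
      calc |((⌊θ * ((j:ℝ)+1)⌋₊ : ℕ) : ℝ)/((j:ℝ)+1) - θ| * |c - a|
          ≤ (1/((j:ℝ)+1)) * |c - a| :=
            mul_le_mul_of_nonneg_right hsmall (abs_nonneg _)
        _ = |c - a| * (1/((j:ℝ)+1)) := by ring
    apply squeeze_zero (fun j => dist_nonneg) hbnd
    simpa using tendsto_one_div_add_atTop_nhds_zero_nat.const_mul |c - a|
  have hcw : ContinuousWithinAt (fun x => Iv F X a x + Iv F X x c) (Set.uIcc a c) b :=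
    contψ.continuousWithinAt hb
  have hcomp : Tendsto (fun j => Iv F X a (u j) + Iv F X (u j) c) atTop
      (nhds (Iv F X a b + Iv F X b c)) :=
    hcw.tendsto.comp (tendsto_nhdsWithin_of_tendsto_nhds_of_eventually_within u hutend
      (Filter.Eventually.of_forall humem))
  have hconst : (fun j => Iv F X a (u j) + Iv F X (u j) c) = fun _ => Iv F X a c :=
    funext hueval
  rw [hconst] at hcomp
  exact tendsto_nhds_unique hcomp tendsto_const_nhds

lemma chen (h : Hyp I F X γ ρ KF KX) {a b c : ℝ} (ha : a ∈ I) (hb : b ∈ I)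
    (hc : c ∈ I) : Iv F X a b + Iv F X b c = Iv F X a c := by
  have tri : b ∈ Set.uIcc a c ∨ a ∈ Set.uIcc b c ∨ c ∈ Set.uIcc a b := by
    simp only [Set.mem_uIcc]
    rcases le_total a b with h1|h1 <;> rcases le_total b c with h2|h2 <;>
      rcases le_total a c with h3|h3 <;> tauto
  rcases tri with ht|ht|ht
  · exact h.chen_mid ha hc ht
  · have h1 := h.chen_mid hb hc ht
    have h2 := h.Iv_comm ha hb
    linarith
  · have h1 := h.chen_mid ha hb ht
    have h2 := h.Iv_comm hb hc
    linarith

end Hyp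
end YoungAux


/-- Young's integral: if `F ∈ C^ρ(I)`, `X ∈ C^γ(I)` with `γ + ρ > 1`, there is an
indefinite integral `A` (with `∫_s^t F dX = A t - A s`) such that for all `s, t ∈ I`,
`|∫_s^t (F_u - F_s) dX_u| = |A t - A s - F_s (X_t - X_s)|
  ≤ (1/(2^{γ+ρ} - 2)) |t-s|^{γ+ρ} ‖F‖_ρ ‖X‖_γ`. -/
theorem young_integral (I : Set ℝ) (hI : I.OrdConnected) (F X : ℝ → ℝ)
    (γ ρ KF KX : ℝ) (hγ : 0 < γ) (hρ : 0 < ρ) (h1 : 1 < γ + ρ)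
    (hKF : 0 ≤ KF) (hKX : 0 ≤ KX)
    (hF : ∀ s ∈ I, ∀ t ∈ I, |F t - F s| ≤ KF * |t - s| ^ ρ)
    (hX : ∀ s ∈ I, ∀ t ∈ I, |X t - X s| ≤ KX * |t - s| ^ γ) :
    ∃ A : ℝ → ℝ, ∀ s ∈ I, ∀ t ∈ I,
      |(A t - A s) - F s * (X t - X s)|
        ≤ (1 / ((2 : ℝ) ^ (γ + ρ) - 2)) * |t - s| ^ (γ + ρ) * KF * KX := by
  rcases I.eq_empty_or_nonempty with rfl | ⟨o, ho⟩
  · exact ⟨0, by simp⟩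
  · have h : YoungAux.Hyp I F X γ ρ KF KX := ⟨hI, hγ, hρ, h1, hKF, hKX, hF, hX⟩
    refine ⟨fun t => YoungAux.Iv F X o t, fun s hs t ht => ?_⟩
    have hch := h.chen ho hs ht
    have he : YoungAux.Iv F X o t - YoungAux.Iv F X o s = YoungAux.Iv F X s t := by
      linarith
    rw [he]
    exact h.main_est hs ht
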